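/- Given a directed graph G = (V,F) with nodes s, t ∈ V, distinct variables p_v for v ∈ V, W = {p_s}, and D = {(p_u : p_u / p_v) | (u,v) ∈ F}, the default theory ⟨W,D⟩ has a unique stable extension E, and p_t ∈ E if and only if t is reachable from s in G. -/
import Mathlib


inductive Form : Type where
  | var : ℕ → Form
  | app : (n : ℕ) → ((Fin n → Bool) → Bool) → (Fin n → Form) → Form

namespace Form

def eval (σ : ℕ → Bool) : Form → Bool
  | var x => σ x
  | app _ f a => f (fun i => (a i).eval σ)

def tru : Form := app 0 (fun _ => true) (fun i => i.elim0)
def fls : Form := app 0 (fun _ => false) (fun i => i.elim0)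
def neg (φ : Form) : Form := app 1 (fun v => !(v 0)) (fun _ => φ)
def conj (φ ψ : Form) : Form := app 2 (fun v => v 0 && v 1) ![φ, ψ]
def disj (φ ψ : Form) : Form := app 2 (fun v => v 0 || v 1) ![φ, ψ]

end Form

/-- σ satisfies all formulae of A. -/
def Sat (σ : ℕ → Bool) (A : Set Form) : Prop := ∀ φ ∈ A, φ.eval σ = true

/-- Semantic consequence A ⊨ φ. -/
def Entails (A : Set Form) (φ : Form) : Prop := ∀ σ, Sat σ A → φ.eval σ = true

/-- Th(A) = {φ | A ⊨ φ}. -/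
def Th (A : Set Form) : Set Form := {φ | Entails A φ}

def Consistent (A : Set Form) : Prop := ∃ σ, Sat σ A

/-- A default rule (α : β / γ). -/
structure Default where
  pre : Form
  just : Form
  con : Form

/-- S contains W, is deductively closed, and closed under defaults applicable w.r.t. E. -/
def GammaClosed (W : Set Form) (D : Set Default) (E S : Set Form) : Prop :=
  W ⊆ S ∧ Th S = S ∧ ∀ d ∈ D, d.pre ∈ S → Form.neg d.just ∉ E → d.con ∈ S

/-- Γ(E): the smallest set satisfying the three closure conditions. -/
def Gamma (W : Set Form) (D : Set Default) (E : Set Form) : Set Form :=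
  ⋂₀ {S | GammaClosed W D E S}

/-- E is a stable extension of ⟨W,D⟩. -/
def Stable (W : Set Form) (D : Set Default) (E : Set Form) : Prop :=
  Gamma W D E = E



namespace Stmt13Aux

lemma subset_Th (A : Set Form) : A ⊆ Th A := fun φ hφ σ hσ => hσ φ hφ

lemma Th_mono {A B : Set Form} (h : A ⊆ B) : Th A ⊆ Th B :=
  fun φ hφ σ hσ => hφ σ (fun ψ hψ => hσ ψ (h hψ))

lemma Th_Th (A : Set Form) : Th (Th A) = Th A := by
  apply Set.Subset.antisymm
  · intro φ hφ σ hσ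
    exact hφ σ (fun ψ hψ => hψ σ hσ)
  · exact subset_Th _

lemma eval_neg (σ : ℕ → Bool) (φ : Form) :
    (Form.neg φ).eval σ = !(φ.eval σ) := rfl

end Stmt13Aux

/-- The graph default theory has a unique stable extension E, and p_t ∈ E iff
t is reachable from s. -/
theorem stmt13 (V : Type) (F : Set (V × V)) (hF : F.Finite) (s t : V)
    (p : V → ℕ) (hp : Function.Injective p) :
    (∃! E : Set Form,
        Stable {Form.var (p s)}
          {d | ∃ e ∈ F, d = ⟨Form.var (p e.1), Form.var (p e.1), Form.var (p e.2)⟩} E) ∧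
    ∀ E : Set Form,
      Stable {Form.var (p s)}
        {d | ∃ e ∈ F, d = ⟨Form.var (p e.1), Form.var (p e.1), Form.var (p e.2)⟩} E →
      (Form.var (p t) ∈ E ↔ Relation.ReflTransGen (fun u v => (u, v) ∈ F) s t) := by
  classical
  open Stmt13Aux in
  set R : V → V → Prop := fun u v => (u, v) ∈ F with hR
  set W : Set Form := {Form.var (p s)} with hW
  set D : Set Default :=
    {d | ∃ e ∈ F, d = ⟨Form.var (p e.1), Form.var (p e.1), Form.var (p e.2)⟩} with hD
  set A0 : Set Form := {φ | ∃ v, Relation.ReflTransGen R s v ∧ φ = Form.var (p v)} with hA0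
  set E0 : Set Form := Th A0 with hE0
  -- the all-true valuation satisfies A0
  have hsatA0 : Sat (fun _ => true) A0 := by
    rintro φ ⟨v, _, rfl⟩
    rfl
  -- negations of variables are not in E0
  have hnegE0 : ∀ x : ℕ, Form.neg (Form.var x) ∉ E0 := by
    intro x hx
    have := hx (fun _ => true) hsatA0
    simp [eval_neg, Form.eval] at this
  -- characterization of variables in E0
  have hvarE0 : ∀ u : V, Form.var (p u) ∈ E0 ↔ Relation.ReflTransGen R s u := by
    intro u
    constructor
    · intro h
      have hσ : Sat (fun x => decide (∃ w, Relation.ReflTransGen R s w ∧ p w = x)) A0 := by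
        rintro φ ⟨v, hv, rfl⟩
        simp [Form.eval]
        exact ⟨v, hv, rfl⟩
      have := h _ hσ
      simp [Form.eval] at this
      obtain ⟨w, hw, hpw⟩ := this
      exact (hp hpw) ▸ hw
    · intro h
      exact subset_Th A0 ⟨u, h, rfl⟩
  -- E0 is GammaClosed with respect to ANY E
  have hE0closed : ∀ E : Set Form, GammaClosed W D E E0 := by
    intro E
    refine ⟨?_, Th_Th A0, ?_⟩
    · intro φ hφ
      rw [hW] at hφ
      rcases hφ with rfl
      exact subset_Th A0 ⟨s, Relation.ReflTransGen.refl, rfl⟩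
    · rintro d ⟨e, he, rfl⟩ hpre _
      exact (hvarE0 e.2).mpr (((hvarE0 e.1).mp hpre).tail he)
  -- if E contains no negated variables, then E0 is contained in any GammaClosed set
  have hsub : ∀ E : Set Form, (∀ x : ℕ, Form.neg (Form.var x) ∉ E) →
      ∀ S : Set Form, GammaClosed W D E S → E0 ⊆ S := by
    intro E hnegE S ⟨hWS, hThS, hDS⟩
    have hA0S : A0 ⊆ S := by
      rintro φ ⟨v, hv, rfl⟩
      induction hv with
      | refl => exact hWS rfl
      | tail _ he ih =>
          exact hDS ⟨_, _, _⟩ ⟨_, he, rfl⟩ ih (hnegE _)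
    calc E0 = Th A0 := rfl
      _ ⊆ Th S := Th_mono hA0S
      _ = S := hThS
  -- Gamma of any negation-free E equals E0
  have hGamma : ∀ E : Set Form, (∀ x : ℕ, Form.neg (Form.var x) ∉ E) →
      Gamma W D E = E0 := by
    intro E hnegE
    apply Set.Subset.antisymm
    · exact Set.sInter_subset_of_mem (hE0closed E)
    · intro φ hφ
      exact Set.mem_sInter.mpr (fun S hS => hsub E hnegE S hS hφ)
  have hE0stable : Stable W D E0 := hGamma E0 hnegE0
  -- every stable extension equals E0
  have huniq : ∀ E : Set Form, Stable W D E → E = E0 := by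
    intro E hE
    have hEsub : E ⊆ E0 := by
      rw [← hE]
      exact Set.sInter_subset_of_mem (hE0closed E)
    have hnegE : ∀ x : ℕ, Form.neg (Form.var x) ∉ E :=
      fun x hx => hnegE0 x (hEsub hx)
    rw [← hE]
    exact hGamma E hnegE
  refine ⟨⟨E0, hE0stable, huniq⟩, ?_⟩
  intro E hE
  rw [huniq E hE]
  exact hvarE0 t
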